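/- Let b = Ax_S + e' where x_S is s-sparse with support in S, let S' ⊆ {1,…,n} with |S'| = t, and suppose A satisfies the RIP of order s+t with constant δ_{s+t} < 1. Let z_p be any minimizer of ‖b − Az‖₂ over vectors z supported in S'. Then ‖x_S − z_p‖₂ ≤ (1/√(1 − δ_{s+t}²))·‖(x_S)_{complement of S'}‖₂ + (√(1+δ_t)/(1 − δ_{s+t}))·‖e'‖₂. -/
import Mathlib


open Finset Matrix

set_option maxHeartbeats 1000000

/-- Euclidean norm of a finitely-indexed real vector. -/
noncomputable def nrm {ι : Type*} [Fintype ι] (x : ι → ℝ) : ℝ :=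
  Real.sqrt (∑ i, x i ^ 2)

open Classical in
/-- Support of a vector as a finite set of indices. -/
noncomputable def spt {n : ℕ} (x : Fin n → ℝ) : Finset (Fin n) :=
  Finset.univ.filter fun i => x i ≠ 0

/-- Restriction of a vector to an index set: keep entries in `U`, zero the rest. -/
def restr {n : ℕ} (x : Fin n → ℝ) (U : Finset (Fin n)) : Fin n → ℝ :=
  fun i => if i ∈ U then x i else 0

/-- `A` satisfies the RIP of order `t` with constant `δ`. -/
def RIP {m n : ℕ} (A : Matrix (Fin m) (Fin n) ℝ) (t : ℕ) (δ : ℝ) : Prop :=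
  ∀ x : Fin n → ℝ, (spt x).card ≤ t →
    (1 - δ) * nrm x ^ 2 ≤ nrm (A.mulVec x) ^ 2 ∧
      nrm (A.mulVec x) ^ 2 ≤ (1 + δ) * nrm x ^ 2

/-! ### Auxiliary dot-product machinery -/

noncomputable def dp {ι : Type*} [Fintype ι] (x y : ι → ℝ) : ℝ := ∑ i, x i * y i

lemma dp_comm {ι : Type*} [Fintype ι] (x y : ι → ℝ) : dp x y = dp y x := by
  simp [dp, mul_comm]

lemma nrm_nonneg {ι : Type*} [Fintype ι] (x : ι → ℝ) : 0 ≤ nrm x := Real.sqrt_nonneg _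

lemma nrm_sq {ι : Type*} [Fintype ι] (x : ι → ℝ) : nrm x ^ 2 = dp x x := by
  rw [nrm, Real.sq_sqrt (Finset.sum_nonneg fun i _ => sq_nonneg _)]
  simp [dp, sq]

lemma dp_self_nonneg {ι : Type*} [Fintype ι] (x : ι → ℝ) : 0 ≤ dp x x :=
  Finset.sum_nonneg fun i _ => mul_self_nonneg _

lemma dp_self_pos {ι : Type*} [Fintype ι] (x : ι → ℝ) (hx : x ≠ 0) : 0 < dp x x := by
  obtain ⟨j, hj⟩ : ∃ j, x j ≠ 0 := by
    by_contra h; push_neg at h; exact hx (funext h)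
  exact Finset.sum_pos' (fun i _ => mul_self_nonneg _)
    ⟨j, Finset.mem_univ _, mul_self_pos.2 hj⟩

lemma cauchy {ι : Type*} [Fintype ι] (x y : ι → ℝ) : dp x y ≤ nrm x * nrm y := by
  have h := Finset.sum_mul_sq_le_sq_mul_sq Finset.univ x y
  calc dp x y ≤ |dp x y| := le_abs_self _
    _ = Real.sqrt ((dp x y) ^ 2) := (Real.sqrt_sq_eq_abs _).symm
    _ ≤ Real.sqrt ((∑ i, x i ^ 2) * (∑ i, y i ^ 2)) := Real.sqrt_le_sqrt (by simpa [dp] using h)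
    _ = nrm x * nrm y := by
        rw [nrm, nrm, ← Real.sqrt_mul (Finset.sum_nonneg fun i _ => sq_nonneg _)]

lemma dp_expand {ι : Type*} [Fintype ι] (a b : ℝ) (x y : ι → ℝ) :
    dp (a • x + b • y) (a • x + b • y)
      = a ^ 2 * dp x x + 2 * a * b * dp x y + b ^ 2 * dp y y := by
  simp only [dp, Pi.add_apply, Pi.smul_apply, smul_eq_mul]
  rw [Finset.sum_congr rfl fun i _ => show (a * x i + b * y i) * (a * x i + b * y i)
    = a ^ 2 * (x i * x i) + 2 * a * b * (x i * y i) + b ^ 2 * (y i * y i) from by ring]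
  simp [Finset.sum_add_distrib, Finset.mul_sum]

lemma dp_add_right {ι : Type*} [Fintype ι] (x y z : ι → ℝ) :
    dp x (y + z) = dp x y + dp x z := by
  simp [dp, mul_add, Finset.sum_add_distrib]

lemma dp_sub_right {ι : Type*} [Fintype ι] (x y z : ι → ℝ) :
    dp x (y - z) = dp x y - dp x z := by
  simp [dp, mul_sub, Finset.sum_sub_distrib]

lemma dp_neg_right {ι : Type*} [Fintype ι] (x y : ι → ℝ) : dp x (-y) = - dp x y := by
  simp [dp, mul_neg]

lemma nrm_neg {ι : Type*} [Fintype ι] (x : ι → ℝ) : nrm (-x) = nrm x := by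
  unfold nrm
  congr 1
  exact Finset.sum_congr rfl fun i _ => by simp

lemma nrm_zero {ι : Type*} [Fintype ι] : nrm (0 : ι → ℝ) = 0 := by simp [nrm]

/-! ### Support lemmas -/

lemma mem_spt {n : ℕ} {x : Fin n → ℝ} {i : Fin n} : i ∈ spt x ↔ x i ≠ 0 := by
  simp [spt]

lemma spt_add_subset {n : ℕ} (x y : Fin n → ℝ) : spt (x + y) ⊆ spt x ∪ spt y := by
  intro i hi
  rw [mem_spt] at hi
  rw [Finset.mem_union, mem_spt, mem_spt]
  by_contra h
  push_neg at h
  exact hi (by simp [h.1, h.2])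

lemma spt_sub_subset {n : ℕ} (x y : Fin n → ℝ) : spt (x - y) ⊆ spt x ∪ spt y := by
  intro i hi
  rw [mem_spt] at hi
  rw [Finset.mem_union, mem_spt, mem_spt]
  by_contra h
  push_neg at h
  exact hi (by simp [h.1, h.2])

lemma spt_smul_subset {n : ℕ} (a : ℝ) (x : Fin n → ℝ) : spt (a • x) ⊆ spt x := by
  intro i hi
  rw [mem_spt] at hi ⊢
  intro h
  exact hi (by simp [h])

lemma spt_restr {n : ℕ} (x : Fin n → ℝ) (U : Finset (Fin n)) : spt (restr x U) ⊆ U := by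
  intro i hi
  rw [mem_spt] at hi
  by_contra h
  exact hi (by simp [restr, h])

/-- RIP near-orthogonality: `⟨u,v⟩ ≤ ⟨Au,Av⟩ + δ‖u‖‖v‖`. -/
lemma rip_key {m n : ℕ} (A : Matrix (Fin m) (Fin n) ℝ) {k : ℕ} {δ : ℝ}
    (hRIP : RIP A k δ) (u v : Fin n → ℝ) (hcard : (spt u ∪ spt v).card ≤ k) :
    dp u v ≤ dp (A.mulVec u) (A.mulVec v) + δ * (nrm u * nrm v) := by
  by_cases hu : u = 0
  · simp [hu, dp, Matrix.mulVec_zero, nrm_zero]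
  by_cases hv : v = 0
  · simp [hv, dp, Matrix.mulVec_zero, nrm_zero]
  set a := nrm v with ha
  set b := nrm u with hbdef
  have ha2 : a ^ 2 = dp v v := nrm_sq v
  have hb2 : b ^ 2 = dp u u := nrm_sq u
  have hapos : 0 < a := by
    have h1 := dp_self_pos v hv
    have h2 := nrm_nonneg v
    nlinarith
  have hbpos : 0 < b := by
    have h1 := dp_self_pos u hu
    have h2 := nrm_nonneg u
    nlinarith
  have hsub : ∀ (c d : ℝ), (spt (c • u + d • v)).card ≤ k := by
    intro c d
    refine le_trans (Finset.card_le_card ?_) hcard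
    exact (spt_add_subset _ _).trans
      (Finset.union_subset_union (spt_smul_subset _ _) (spt_smul_subset _ _))
  have hP1 := (hRIP (a • u + b • v) (hsub a b)).1
  have hP2 := (hRIP (a • u + (-b) • v) (hsub a (-b))).2
  have hm1 : A.mulVec (a • u + b • v) = a • A.mulVec u + b • A.mulVec v := by
    rw [Matrix.mulVec_add, Matrix.mulVec_smul, Matrix.mulVec_smul]
  have hm2 : A.mulVec (a • u + (-b) • v) = a • A.mulVec u + (-b) • A.mulVec v := by
    rw [Matrix.mulVec_add, Matrix.mulVec_smul, Matrix.mulVec_smul]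
  rw [nrm_sq, nrm_sq, hm1, dp_expand, dp_expand] at hP1
  rw [nrm_sq, nrm_sq, hm2, dp_expand, dp_expand] at hP2
  rw [← ha2, ← hb2] at hP1 hP2
  have hab : 0 < b * a := mul_pos hbpos hapos
  apply le_of_mul_le_mul_left _ hab
  nlinarith [hP1, hP2, ha2, hb2]

/-- Final numerical computation, isolated with a clean context. -/
lemma final_calc (d E beta H q : ℝ) (hδ0 : 0 ≤ d) (hδ1 : d < 1) (hH : 0 ≤ H)
    (hβ : 0 ≤ beta) (hE : 0 ≤ E) (hq : 0 < q) (hq2 : q ^ 2 = 1 - d ^ 2)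
    (hquad : H ^ 2 ≤ (d * H + E) ^ 2 + beta ^ 2) :
    H ≤ beta / q + E / (1 - d) := by
  have hd : (0:ℝ) < 1 - d := by linarith
  set P := (1 - d) * H - E with hPdef
  have hfact : P * ((1 + d) * H + E) ≤ beta ^ 2 := by rw [hPdef]; nlinarith [hquad]
  by_cases hP : P ≤ 0
  · have hHE : H ≤ E / (1 - d) := by
      rw [le_div_iff₀ hd]
      nlinarith [hP]
    have : 0 ≤ beta / q := div_nonneg hβ hq.le
    linarith
  · push_neg at hP
    have hbr : (1 + d) * P ≤ (1 - d) * ((1 + d) * H + E) := by rw [hPdef]; nlinarith [hE, hH]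
    have hstep : (1 + d) * P ^ 2 ≤ (1 - d) * beta ^ 2 := by
      have m1 : (1 - d) * (P * ((1 + d) * H + E)) ≤ (1 - d) * beta ^ 2 :=
        mul_le_mul_of_nonneg_left hfact hd.le
      have m2 : P * ((1 + d) * P) ≤ P * ((1 - d) * ((1 + d) * H + E)) :=
        mul_le_mul_of_nonneg_left hbr hP.le
      nlinarith [m1, m2]
    have hPle : P ≤ beta * (1 - d) / q := by
      have hQ0 : 0 ≤ beta * (1 - d) / q := div_nonneg (mul_nonneg hβ hd.le) hq.le
      have hsq : P ^ 2 ≤ (beta * (1 - d) / q) ^ 2 := by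
        rw [div_pow, le_div_iff₀ (by positivity)]
        have e3 : (beta * (1 - d)) ^ 2 = beta ^ 2 * (1 - d) ^ 2 := by ring
        rw [hq2, e3]
        have hm := mul_le_mul_of_nonneg_left hstep hd.le
        nlinarith [hm]
      nlinarith [hsq, hQ0, hP.le,
        sq_nonneg (P - beta * (1 - d) / q), sq_nonneg (P + beta * (1 - d) / q)]
    have hfin : H ≤ (beta * (1 - d) / q + E) / (1 - d) := by
      rw [le_div_iff₀ hd]
      rw [hPdef] at hPle
      linarith
    calc H ≤ (beta * (1 - d) / q + E) / (1 - d) := hfin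
      _ = beta / q + E / (1 - d) := by field_simp

theorem stmt_9 {m n : ℕ} (A : Matrix (Fin m) (Fin n) ℝ) (s t : ℕ)
    (δst δt : ℝ) (hRIPst : RIP A (s + t) δst) (hδst : δst < 1) (hRIPt : RIP A t δt)
    (xS : Fin n → ℝ) (S : Finset (Fin n)) (hS : S.card ≤ s) (hxS : spt xS ⊆ S)
    (e' : Fin m → ℝ) (b : Fin m → ℝ) (hb : b = A.mulVec xS + e')
    (S' : Finset (Fin n)) (hS' : S'.card = t)
    (zp : Fin n → ℝ) (hzp : spt zp ⊆ S')
    (hmin : ∀ z : Fin n → ℝ, spt z ⊆ S' → nrm (b - A.mulVec zp) ≤ nrm (b - A.mulVec z)) :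
    nrm (xS - zp) ≤ (1 / Real.sqrt (1 - δst ^ 2)) * nrm (restr xS S'ᶜ)
      + (Real.sqrt (1 + δt) / (1 - δst)) * nrm e' := by
  have hd : (0:ℝ) < 1 - δst := by linarith
  set h : Fin n → ℝ := xS - zp with hhdef
  by_cases hne : h = 0
  · rw [hne, nrm_zero]
    have t1 : 0 ≤ (1 / Real.sqrt (1 - δst ^ 2)) * nrm (restr xS S'ᶜ) :=
      mul_nonneg (by positivity) (nrm_nonneg _)
    have t2 : 0 ≤ (Real.sqrt (1 + δt) / (1 - δst)) * nrm e' :=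
      mul_nonneg (div_nonneg (Real.sqrt_nonneg _) hd.le) (nrm_nonneg _)
    linarith
  -- notation
  set u : Fin n → ℝ := restr h S' with hudef
  set c : Fin n → ℝ := restr xS S'ᶜ with hcdef
  set H := nrm h with hHdef
  set α := nrm u with hαdef
  set β := nrm c with hβdef
  set E := Real.sqrt (1 + δt) * nrm e' with hEdef
  have hH0 : 0 ≤ H := nrm_nonneg _
  have hα0 : 0 ≤ α := nrm_nonneg _
  have hβ0 : 0 ≤ β := nrm_nonneg _
  have hE0 : 0 ≤ E := mul_nonneg (Real.sqrt_nonneg _) (nrm_nonneg _)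
  -- support cards
  have hspth : spt h ⊆ S ∪ S' := (spt_sub_subset _ _).trans (Finset.union_subset_union hxS hzp)
  have hcardSS : (S ∪ S').card ≤ s + t :=
    (Finset.card_union_le _ _).trans (add_le_add hS hS'.le)
  have hcardh : (spt h).card ≤ s + t := (Finset.card_le_card hspth).trans hcardSS
  have hsptu : spt u ⊆ S' := spt_restr _ _
  have hcardu : (spt u).card ≤ t := (Finset.card_le_card hsptu).trans hS'.le
  have hcarduh : (spt u ∪ spt h).card ≤ s + t := by
    refine (Finset.card_le_card ?_).trans hcardSS
    exact Finset.union_subset (hsptu.trans Finset.subset_union_right) hspth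
  -- δst ≥ 0
  have hHpos : 0 < dp h h := dp_self_pos h hne
  have hδ0 : 0 ≤ δst := by
    have h1 := (hRIPst h hcardh).1
    have h2 := (hRIPst h hcardh).2
    rw [nrm_sq h] at h1 h2
    nlinarith [dp_self_nonneg (A.mulVec h)]
  -- decomposition h = u + c
  have hdecomp : h = u + c := by
    funext i
    by_cases hi : i ∈ S'
    · have hic : i ∉ S'ᶜ := by simp [hi]
      simp [hudef, hcdef, restr, hi, hic]
    · have hic : i ∈ S'ᶜ := by simp [hi]
      have hzpi : zp i = 0 := by
        by_contra hz
        exact hi (hzp (mem_spt.2 hz))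
      simp [hudef, hcdef, restr, hi, hic, hhdef, hzpi]
  have hduc : dp u c = 0 := by
    apply Finset.sum_eq_zero
    intro i _
    by_cases hi : i ∈ S'
    · have hic : i ∉ S'ᶜ := by simp [hi]
      simp [hcdef, restr, hic]
    · simp [hudef, restr, hi]
  -- ‖h‖² = α² + β²
  have hpyth : H ^ 2 = α ^ 2 + β ^ 2 := by
    have : dp h h = dp u u + dp c c := by
      have e1 : h = (1:ℝ) • u + (1:ℝ) • c := by simp [hdecomp]
      rw [e1, dp_expand]
      simp [hduc]
    rw [hHdef, hαdef, hβdef, nrm_sq, nrm_sq, nrm_sq, this]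
  -- orthogonality of the residual
  set r : Fin m → ℝ := b - A.mulVec zp with hrdef
  have horth : ∀ v : Fin n → ℝ, spt v ⊆ S' → dp r (A.mulVec v) = 0 := by
    intro v hv
    by_contra hcne
    set w := A.mulVec v with hwdef
    have hw : w ≠ 0 := by
      intro hw0
      exact hcne (by simp [hw0, dp])
    have hN : 0 < dp w w := dp_self_pos w hw
    set ε := dp r w / dp w w with hεdef
    have hz := hmin (zp + ε • v) ((spt_add_subset _ _).trans
      (Finset.union_subset hzp ((spt_smul_subset _ _).trans hv)))
    have hbz : b - A.mulVec (zp + ε • v) = (1:ℝ) • r + (-ε) • w := by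
      rw [Matrix.mulVec_add, Matrix.mulVec_smul]
      funext i
      simp [hrdef, hwdef]
      ring
    rw [hbz] at hz
    have hsq : nrm r ^ 2 ≤ nrm ((1:ℝ) • r + (-ε) • w) ^ 2 :=
      pow_le_pow_left₀ (nrm_nonneg _) hz 2
    rw [nrm_sq, nrm_sq, dp_expand] at hsq
    have hexp : 0 ≤ -2 * ε * dp r w + ε ^ 2 * dp w w := by nlinarith [hsq]
    have hεval : -2 * ε * dp r w + ε ^ 2 * dp w w = -((dp r w) ^ 2 / dp w w) := by
      rw [hεdef]; field_simp; ring
    have hpos : 0 < (dp r w) ^ 2 / dp w w :=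
      div_pos (by positivity) hN
    rw [hεval] at hexp
    linarith
  -- key inner product bound
  have hkey := rip_key A hRIPst u h hcarduh
  -- dp u h = α²
  have hduh : dp u h = α ^ 2 := by
    rw [hdecomp, dp_add_right, hduc, add_zero, hαdef, nrm_sq]
  -- A h = r - e'
  have hAh : A.mulVec h = r - e' := by
    rw [hhdef, Matrix.mulVec_sub, hrdef, hb]
    funext i
    simp only [Pi.sub_apply, Pi.add_apply]
    ring
  have hAuh : dp (A.mulVec u) (A.mulVec h) = - dp (A.mulVec u) e' := by
    rw [hAh, dp_sub_right]
    rw [dp_comm (A.mulVec u) r, horth u hsptu]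
    ring
  -- α ≤ δst * H + E
  have hαb : α ≤ δst * H + E := by
    by_cases hu0 : u = 0
    · have : α = 0 := by rw [hαdef, hu0, nrm_zero]
      rw [this]
      have := mul_nonneg hδ0 hH0
      linarith
    · have hαpos : 0 < α := by
        have h1 := dp_self_pos u hu0
        have h2 := nrm_nonneg u
        rw [hαdef]
        nlinarith [nrm_sq u]
      have hu1 := (hRIPt u hcardu).1
      have hu2 := (hRIPt u hcardu).2
      have hα2pos : 0 < α ^ 2 := pow_pos hαpos 2
      have hδt0 : 0 ≤ δt := by nlinarith [hu1, hu2, hα2pos, dp_self_nonneg (A.mulVec u), nrm_sq (A.mulVec u)]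
      have hAu : nrm (A.mulVec u) ≤ Real.sqrt (1 + δt) * α := by
        have h1 : nrm (A.mulVec u) = Real.sqrt (nrm (A.mulVec u) ^ 2) :=
          (Real.sqrt_sq (nrm_nonneg _)).symm
        rw [h1]
        calc Real.sqrt (nrm (A.mulVec u) ^ 2) ≤ Real.sqrt ((1 + δt) * α ^ 2) :=
              Real.sqrt_le_sqrt hu2
          _ = Real.sqrt (1 + δt) * α := by
              rw [Real.sqrt_mul (by linarith), Real.sqrt_sq hα0]
      have hce : dp (A.mulVec u) (-e') ≤ nrm (A.mulVec u) * nrm (-e') := cauchy _ _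
      rw [dp_neg_right, nrm_neg] at hce
      have hstep : α ^ 2 ≤ E * α + δst * (α * H) := by
        have h2 : - dp (A.mulVec u) e' ≤ Real.sqrt (1 + δt) * α * nrm e' := by
          calc - dp (A.mulVec u) e' ≤ nrm (A.mulVec u) * nrm e' := hce
            _ ≤ Real.sqrt (1 + δt) * α * nrm e' :=
                mul_le_mul_of_nonneg_right hAu (nrm_nonneg _)
        rw [hduh, hAuh] at hkey
        rw [hEdef]
        nlinarith [hkey, h2]
      have hmul : α * α ≤ (δst * H + E) * α := by nlinarith [hstep]
      exact le_of_mul_le_mul_right hmul hαpos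
  -- final numeric computation
  set q := Real.sqrt (1 - δst ^ 2) with hqdef
  have h1δ2 : 0 < 1 - δst ^ 2 := by nlinarith
  have hq : 0 < q := Real.sqrt_pos.2 h1δ2
  have hq2 : q ^ 2 = 1 - δst ^ 2 := Real.sq_sqrt h1δ2.le
  suffices hfin : H ≤ β / q + E / (1 - δst) by
    have e1 : (1 / q) * β = β / q := by ring
    have e2 : (Real.sqrt (1 + δt) / (1 - δst)) * nrm e' = E / (1 - δst) := by
      rw [hEdef]; ring
    rw [e1, e2]
    exact hfin
  have hquad : H ^ 2 ≤ (δst * H + E) ^ 2 + β ^ 2 := by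
    have h1 : α ^ 2 ≤ (δst * H + E) ^ 2 := by nlinarith [hαb, hα0]
    linarith [hpyth]
  exact final_calc δst E β H q hδ0 hδst hH0 hβ0 hE0 hq hq2 hquad
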